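/- Let N ≥ 1, let S, R, C, U, V be constant N×N complex matrices, and let Ψ₀ : (0,1) → GL_N(ℂ) be smooth with y(1−y)Ψ₀'(y) = (S + yR)Ψ₀(y) on (0,1). Let a : (0,1) → ℂ be the smooth scalar function with a(y)I = (C − yU) − 2(S + yR), and set F(y) := −Ψ₀(y)^{−1}VΨ₀(y) − y(1−y)Ψ₀(y)^{−1}Ψ₀''(y) − a(y)Ψ₀(y)^{−1}Ψ₀'(y). For κ ≥ 0 let a^{(κ)} : (0,1) → ℂ, F^{(κ)} : (0,1) → M_N(ℂ) be smooth, let Q Ω^{(κ)} := y(1−y)Q'' + a^{(κ)}(y)Q' + Q F^{(κ)}(y), and let D^{(κ)} := Ψ₀ Ω^{(κ)} Ψ₀^{−1}. Then D^{(κ)} equals the operator P ↦ y(1−y)P'' + P'((C+κI) − y(U+2κI)) − P(V + κU + κ(κ−1)I) on smooth matrix-valued functions on (0,1) if and only if a^{(κ)}(y) = a(y) + κ(1−2y) and F^{(κ)}(y) = F(y) − κΨ₀(y)^{−1}(U + (κ−1)I)Ψ₀(y) − κ(1−2y)Ψ₀(y)^{−1}Ψ₀'(y) for all y ∈ (0,1).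 -/

import Mathlib

open Matrix Set

/-- Entrywise derivative of a matrix-valued function on `ℝ`. -/
noncomputable def mderiv {N : ℕ} (Q : ℝ → Matrix (Fin N) (Fin N) ℂ) :
    ℝ → Matrix (Fin N) (Fin N) ℂ :=
  fun y => Matrix.of fun i j => deriv (fun t => Q t i j) y

/-- The operator `Ω^{(κ)}` acting on the right:
`Q Ω^{(κ)} = y(1−y)Q'' + a^{(κ)}(y)Q' + Q F^{(κ)}(y)`. -/
noncomputable def OmegaOp {N : ℕ} (a : ℝ → ℂ) (F : ℝ → Matrix (Fin N) (Fin N) ℂ)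
    (Q : ℝ → Matrix (Fin N) (Fin N) ℂ) : ℝ → Matrix (Fin N) (Fin N) ℂ :=
  fun y =>
    ((y : ℂ) * (1 - (y : ℂ))) • mderiv (mderiv Q) y + a y • mderiv Q y + Q y * F y

/-- The conjugated operator `D^{(κ)} = Ψ₀ Ω^{(κ)} Ψ₀⁻¹`. -/
noncomputable def DconjOp {N : ℕ} (Ψ : ℝ → Matrix (Fin N) (Fin N) ℂ)
    (a : ℝ → ℂ) (F : ℝ → Matrix (Fin N) (Fin N) ℂ)
    (P : ℝ → Matrix (Fin N) (Fin N) ℂ) : ℝ → Matrix (Fin N) (Fin N) ℂ :=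
  fun y => OmegaOp a F (fun t => P t * Ψ t) y * (Ψ y)⁻¹

lemma mderiv_apply {N : ℕ} (Q : ℝ → Matrix (Fin N) (Fin N) ℂ) (y : ℝ) (i j : Fin N) :
    mderiv Q y i j = deriv (fun t => Q t i j) y := rfl

lemma mderiv_smooth {N : ℕ} {Q : ℝ → Matrix (Fin N) (Fin N) ℂ}
    (h : ∀ i j, ContDiffOn ℝ (⊤ : ℕ∞) (fun t => Q t i j) (Set.Ioo 0 1)) :
    ∀ i j, ContDiffOn ℝ (⊤ : ℕ∞) (fun t => mderiv Q t i j) (Set.Ioo 0 1) := by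
  intro i j
  have := (h i j).deriv_of_isOpen isOpen_Ioo (m := (⊤ : ℕ∞)) (by simp)
  exact this

lemma diffAt_entries {N : ℕ} {Q : ℝ → Matrix (Fin N) (Fin N) ℂ}
    (h : ∀ i j, ContDiffOn ℝ (⊤ : ℕ∞) (fun t => Q t i j) (Set.Ioo 0 1))
    {y : ℝ} (hy : y ∈ Set.Ioo (0:ℝ) 1) :
    ∀ i j, DifferentiableAt ℝ (fun t => Q t i j) y := fun i j =>
  ((h i j).contDiffAt (isOpen_Ioo.mem_nhds hy)).differentiableAt (by simp)

lemma mderiv_mul {N : ℕ} (P Q : ℝ → Matrix (Fin N) (Fin N) ℂ) (y : ℝ)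
    (hP : ∀ i j, DifferentiableAt ℝ (fun t => P t i j) y)
    (hQ : ∀ i j, DifferentiableAt ℝ (fun t => Q t i j) y) :
    mderiv (fun t => P t * Q t) y = mderiv P y * Q y + P y * mderiv Q y := by
  ext i j
  have h1 : (fun t => (P t * Q t) i j) = fun t => ∑ k, P t i k * Q t k j := by
    funext t; simp [Matrix.mul_apply]
  simp only [mderiv_apply, Matrix.add_apply, Matrix.mul_apply, mderiv, Matrix.of_apply]
  rw [deriv_fun_sum (fun k _ => ((hP i k).fun_mul (hQ k j))), ← Finset.sum_add_distrib]
  refine Finset.sum_congr rfl fun k _ => ?_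
  rw [deriv_fun_mul (hP i k) (hQ k j)]

lemma mderiv_add {N : ℕ} (P Q : ℝ → Matrix (Fin N) (Fin N) ℂ) (y : ℝ)
    (hP : ∀ i j, DifferentiableAt ℝ (fun t => P t i j) y)
    (hQ : ∀ i j, DifferentiableAt ℝ (fun t => Q t i j) y) :
    mderiv (fun t => P t + Q t) y = mderiv P y + mderiv Q y := by
  ext i j
  simp only [mderiv, Matrix.of_apply, Matrix.add_apply]
  exact deriv_add (hP i j) (hQ i j)

lemma mderiv2_mul {N : ℕ} (P Q : ℝ → Matrix (Fin N) (Fin N) ℂ)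
    (hP : ∀ i j, ContDiffOn ℝ (⊤ : ℕ∞) (fun t => P t i j) (Set.Ioo 0 1))
    (hQ : ∀ i j, ContDiffOn ℝ (⊤ : ℕ∞) (fun t => Q t i j) (Set.Ioo 0 1))
    {y : ℝ} (hy : y ∈ Set.Ioo (0:ℝ) 1) :
    mderiv (mderiv (fun t => P t * Q t)) y
      = mderiv (mderiv P) y * Q y + (2:ℂ) • (mderiv P y * mderiv Q y)
        + P y * mderiv (mderiv Q) y := by
  have hstep : mderiv (mderiv (fun t => P t * Q t)) y
      = mderiv (fun t => mderiv P t * Q t + P t * mderiv Q t) y := by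
    ext i j
    simp only [mderiv_apply]
    apply Filter.EventuallyEq.deriv_eq
    filter_upwards [isOpen_Ioo.mem_nhds hy] with t ht
    rw [← mderiv_apply, mderiv_mul P Q t (diffAt_entries hP ht) (diffAt_entries hQ ht)]
  rw [hstep, mderiv_add _ _ y, mderiv_mul _ _ y (diffAt_entries (mderiv_smooth hP) hy)
      (diffAt_entries hQ hy), mderiv_mul _ _ y (diffAt_entries hP hy)
      (diffAt_entries (mderiv_smooth hQ) hy)]
  · module
  · intro i j
    have h1 := diffAt_entries (mderiv_smooth hP) hy
    have h2 := diffAt_entries hQ hy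
    have : (fun t => (mderiv P t * Q t) i j) = fun t => ∑ k, mderiv P t i k * Q t k j := by
      funext t; simp [Matrix.mul_apply]
    rw [this]
    exact DifferentiableAt.fun_sum fun k _ => (h1 i k).mul (h2 k j)
  · intro i j
    have h1 := diffAt_entries hP hy
    have h2 := diffAt_entries (mderiv_smooth hQ) hy
    have : (fun t => (P t * mderiv Q t) i j) = fun t => ∑ k, P t i k * mderiv Q t k j := by
      funext t; simp [Matrix.mul_apply]
    rw [this]
    exact DifferentiableAt.fun_sum fun k _ => (h1 i k).mul (h2 k j)

lemma expand_alg {N : ℕ} (P0 P1 P2 Q0 Q1 Q2 Fk M W : Matrix (Fin N) (Fin N) ℂ) (z c : ℂ)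
    (hinv : Q0 * M = 1) (h2 : z • (P1 * Q1) = P1 * W * Q0) :
    (z • (P2*Q0 + (2:ℂ)•(P1*Q1) + P0*Q2) + c • (P1*Q0 + P0*Q1) + (P0*Q0)*Fk) * M
      = z • P2 + P1 * (c•(1 : Matrix (Fin N) (Fin N) ℂ) + (2:ℂ)•W)
        + P0 * ((z•Q2 + c•Q1 + Q0*Fk) * M) := by
  rw [smul_add, smul_add, smul_comm z (2:ℂ), h2]
  simp only [add_mul, smul_mul_assoc, mul_add, mul_smul_comm, mul_assoc, hinv, mul_one]
  module

lemma Dconj_expand {N : ℕ} (S R : Matrix (Fin N) (Fin N) ℂ)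
    (Ψ P : ℝ → Matrix (Fin N) (Fin N) ℂ) (aκ : ℝ → ℂ) (Fκ : ℝ → Matrix (Fin N) (Fin N) ℂ)
    (hΨsmooth : ∀ i j, ContDiffOn ℝ (⊤ : ℕ∞) (fun t => Ψ t i j) (Set.Ioo 0 1))
    (hΨinv : ∀ y ∈ Set.Ioo (0:ℝ) 1, IsUnit (Ψ y))
    (hΨode : ∀ y ∈ Set.Ioo (0:ℝ) 1,
      ((y : ℂ) * (1 - (y : ℂ))) • mderiv Ψ y = (S + (y : ℂ) • R) * Ψ y)
    (hP : ∀ i j, ContDiffOn ℝ (⊤ : ℕ∞) (fun t => P t i j) (Set.Ioo 0 1))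
    {y : ℝ} (hy : y ∈ Set.Ioo (0:ℝ) 1) :
    DconjOp Ψ aκ Fκ P y
      = ((y : ℂ) * (1 - (y : ℂ))) • mderiv (mderiv P) y
        + mderiv P y * (aκ y • (1 : Matrix (Fin N) (Fin N) ℂ) + (2:ℂ) • (S + (y : ℂ) • R))
        + P y * ((((y : ℂ) * (1 - (y : ℂ))) • mderiv (mderiv Ψ) y
            + aκ y • mderiv Ψ y + Ψ y * Fκ y) * (Ψ y)⁻¹) := by
  have hinv : Ψ y * (Ψ y)⁻¹ = 1 :=
    Matrix.mul_nonsing_inv _ ((Matrix.isUnit_iff_isUnit_det _).1 (hΨinv y hy))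
  have h2 : ((y : ℂ) * (1 - (y : ℂ))) • (mderiv P y * mderiv Ψ y)
      = mderiv P y * (S + (y : ℂ) • R) * Ψ y := by
    rw [← mul_smul_comm, hΨode y hy, mul_assoc]
  show (((y : ℂ) * (1 - (y : ℂ))) • mderiv (mderiv (fun t => P t * Ψ t)) y
      + aκ y • mderiv (fun t => P t * Ψ t) y + (P y * Ψ y) * Fκ y) * (Ψ y)⁻¹ = _
  rw [mderiv_mul P Ψ y (diffAt_entries hP hy) (diffAt_entries hΨsmooth hy),
    mderiv2_mul P Ψ hP hΨsmooth hy]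
  exact expand_alg (P y) (mderiv P y) (mderiv (mderiv P) y) (Ψ y) (mderiv Ψ y)
    (mderiv (mderiv Ψ) y) (Fκ y) ((Ψ y)⁻¹) (S + (y:ℂ) • R) _ _ hinv h2

lemma mderiv_one {N : ℕ} :
    mderiv (fun _ : ℝ => (1 : Matrix (Fin N) (Fin N) ℂ)) = fun _ => 0 := by
  funext y; ext i j; simp [mderiv]

lemma mderiv_tsmul {N : ℕ} :
    mderiv (fun t : ℝ => (t : ℂ) • (1 : Matrix (Fin N) (Fin N) ℂ))
      = fun _ => (1 : Matrix (Fin N) (Fin N) ℂ) := by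
  funext y; ext i j
  have : (fun t : ℝ => ((t : ℂ) • (1 : Matrix (Fin N) (Fin N) ℂ)) i j)
      = fun t : ℝ => (t : ℂ) * (1 : Matrix (Fin N) (Fin N) ℂ) i j := by
    funext t; simp [Matrix.smul_apply]
  simp only [mderiv, Matrix.of_apply]
  rw [this]
  have hd : HasDerivAt (fun t : ℝ => (t : ℂ)) 1 y := by
    exact Complex.ofRealCLM.hasDerivAt (x := y)
  rw [(hd.mul_const _).deriv, one_mul]

lemma mderiv_zero {N : ℕ} :
    mderiv (fun _ : ℝ => (0 : Matrix (Fin N) (Fin N) ℂ)) = fun _ => 0 := by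
  funext y; ext i j; simp [mderiv]


/-- `D^{(κ)} = Ψ₀ Ω^{(κ)} Ψ₀⁻¹` equals the deformed hypergeometric operator
`P ↦ y(1−y)P'' + P'((C+κI) − y(U+2κI)) − P(V + κU + κ(κ−1)I)` if and only if
`a^{(κ)}(y) = a(y) + κ(1−2y)` and
`F^{(κ)}(y) = F(y) − κΨ₀⁻¹(U + (κ−1)I)Ψ₀ − κ(1−2y)Ψ₀⁻¹Ψ₀'`. -/
theorem stmt3 {N : ℕ} (hN : 1 ≤ N) (S R C U V : Matrix (Fin N) (Fin N) ℂ)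
    (Ψ : ℝ → Matrix (Fin N) (Fin N) ℂ)
    (hΨsmooth : ∀ i j, ContDiffOn ℝ (⊤ : ℕ∞) (fun t => Ψ t i j) (Set.Ioo 0 1))
    (hΨinv : ∀ y ∈ Set.Ioo (0:ℝ) 1, IsUnit (Ψ y))
    (hΨode : ∀ y ∈ Set.Ioo (0:ℝ) 1,
      ((y : ℂ) * (1 - (y : ℂ))) • mderiv Ψ y = (S + (y : ℂ) • R) * Ψ y)
    (a : ℝ → ℂ)
    (ha : ∀ y ∈ Set.Ioo (0:ℝ) 1,
      a y • (1 : Matrix (Fin N) (Fin N) ℂ)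
        = (C - (y : ℂ) • U) - (2 : ℂ) • (S + (y : ℂ) • R))
    (F : ℝ → Matrix (Fin N) (Fin N) ℂ)
    (hFdef : ∀ y ∈ Set.Ioo (0:ℝ) 1,
      F y = -((Ψ y)⁻¹ * V * Ψ y)
        - ((y : ℂ) * (1 - (y : ℂ))) • ((Ψ y)⁻¹ * mderiv (mderiv Ψ) y)
        - a y • ((Ψ y)⁻¹ * mderiv Ψ y))
    (κ : ℝ) (hκ : 0 ≤ κ)
    (aκ : ℝ → ℂ) (Fκ : ℝ → Matrix (Fin N) (Fin N) ℂ)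
    (haκ : ContDiffOn ℝ (⊤ : ℕ∞) aκ (Set.Ioo 0 1))
    (hFκ : ∀ i j, ContDiffOn ℝ (⊤ : ℕ∞) (fun t => Fκ t i j) (Set.Ioo 0 1)) :
    (∀ P : ℝ → Matrix (Fin N) (Fin N) ℂ,
      (∀ i j, ContDiffOn ℝ (⊤ : ℕ∞) (fun t => P t i j) (Set.Ioo 0 1)) →
      ∀ y ∈ Set.Ioo (0:ℝ) 1,
        DconjOp Ψ aκ Fκ P y =
          ((y : ℂ) * (1 - (y : ℂ))) • mderiv (mderiv P) y
            + mderiv P y * ((C + (κ : ℂ) • (1 : Matrix (Fin N) (Fin N) ℂ))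
                - (y : ℂ) • (U + (2 * (κ : ℂ)) • (1 : Matrix (Fin N) (Fin N) ℂ)))
            - P y * (V + (κ : ℂ) • U
                + ((κ : ℂ) * ((κ : ℂ) - 1)) • (1 : Matrix (Fin N) (Fin N) ℂ)))
    ↔
    (∀ y ∈ Set.Ioo (0:ℝ) 1,
      aκ y = a y + (κ : ℂ) * (1 - 2 * (y : ℂ))
      ∧ Fκ y = F y
          - (κ : ℂ) • ((Ψ y)⁻¹ * (U + ((κ : ℂ) - 1) • (1 : Matrix (Fin N) (Fin N) ℂ)) * Ψ y)
          - ((κ : ℂ) * (1 - 2 * (y : ℂ))) • ((Ψ y)⁻¹ * mderiv Ψ y)) := by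
  constructor
  · intro h y hy
    have hdet := (Matrix.isUnit_iff_isUnit_det _).1 (hΨinv y hy)
    have hinv : Ψ y * (Ψ y)⁻¹ = 1 := Matrix.mul_nonsing_inv _ hdet
    have hinv' : (Ψ y)⁻¹ * Ψ y = 1 := Matrix.nonsing_inv_mul _ hdet
    have hc2 : ∀ A : Matrix (Fin N) (Fin N) ℂ, (Ψ y)⁻¹ * (Ψ y * A) = A := by
      intro A; rw [← mul_assoc, hinv', one_mul]
    -- Test with P = 1
    have hP1s : ∀ i j, ContDiffOn ℝ (⊤:ℕ∞)
        (fun t => (fun _ : ℝ => (1 : Matrix (Fin N) (Fin N) ℂ)) t i j) (Set.Ioo 0 1) :=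
      fun i j => contDiffOn_const
    have E0 := h (fun _ => 1) hP1s y hy
    rw [Dconj_expand S R Ψ _ aκ Fκ hΨsmooth hΨinv hΨode hP1s hy] at E0
    simp only [mderiv_one, mderiv_zero, smul_zero, zero_mul, one_mul, zero_add,
      zero_sub] at E0
    -- Test with P = t • 1
    have hP2s : ∀ i j, ContDiffOn ℝ (⊤:ℕ∞)
        (fun t => (fun s : ℝ => (s : ℂ) • (1 : Matrix (Fin N) (Fin N) ℂ)) t i j)
        (Set.Ioo 0 1) := by
      intro i j
      have : (fun t : ℝ => ((t:ℂ) • (1 : Matrix (Fin N) (Fin N) ℂ)) i j)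
          = fun t : ℝ => (t:ℂ) * (1 : Matrix (Fin N) (Fin N) ℂ) i j := by
        funext t; simp [Matrix.smul_apply]
      rw [this]
      exact (Complex.ofRealCLM.contDiff.contDiffOn).mul contDiffOn_const
    have E1 := h (fun s => (s:ℂ) • 1) hP2s y hy
    rw [Dconj_expand S R Ψ _ aκ Fκ hΨsmooth hΨinv hΨode hP2s hy] at E1
    simp only [mderiv_tsmul, mderiv_one, smul_zero, zero_add, one_mul] at E1
    rw [E0] at E1
    simp only [smul_mul_assoc, one_mul, mul_neg, sub_eq_add_neg] at E1
    have E1' : aκ y • (1 : Matrix (Fin N) (Fin N) ℂ) + (2:ℂ) • (S + (y:ℂ) • R)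
        = (C + (κ : ℂ) • (1 : Matrix (Fin N) (Fin N) ℂ))
            - (y : ℂ) • (U + (2 * (κ : ℂ)) • (1 : Matrix (Fin N) (Fin N) ℂ)) := by
      rw [sub_eq_add_neg]
      exact add_right_cancel E1
    have hsc : aκ y • (1 : Matrix (Fin N) (Fin N) ℂ)
        = (a y + (κ:ℂ) * (1 - 2*(y:ℂ))) • (1 : Matrix (Fin N) (Fin N) ℂ) := by
      have h' : aκ y • (1 : Matrix (Fin N) (Fin N) ℂ)
          = ((C + (κ : ℂ) • (1 : Matrix (Fin N) (Fin N) ℂ))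
              - (y : ℂ) • (U + (2 * (κ : ℂ)) • (1 : Matrix (Fin N) (Fin N) ℂ)))
            - (2:ℂ) • (S + (y:ℂ) • R) := eq_sub_of_add_eq E1'
      rw [h', add_smul, ha y hy]
      module
    have haκy : aκ y = a y + (κ:ℂ) * (1 - 2*(y:ℂ)) := by
      have h00 := congrArg (fun M => M ⟨0, hN⟩ ⟨0, hN⟩) hsc
      simpa [Matrix.smul_apply, Matrix.one_apply_eq] using h00
    refine ⟨haκy, ?_⟩
    -- extract Fκ from E0
    have key : ((y : ℂ) * (1 - (y : ℂ))) • mderiv (mderiv Ψ) y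
        + aκ y • mderiv Ψ y + Ψ y * Fκ y
        = -((V + (κ : ℂ) • U
            + ((κ : ℂ) * ((κ : ℂ) - 1)) • (1 : Matrix (Fin N) (Fin N) ℂ)) * Ψ y) := by
      have := congrArg (fun M => M * Ψ y) E0
      simp only [mul_assoc, hinv', mul_one, neg_mul] at this
      exact this
    have hFκy : Fκ y = (Ψ y)⁻¹ * (Ψ y * Fκ y) := (hc2 _).symm
    have hΨFκ : Ψ y * Fκ y
        = -((V + (κ : ℂ) • U
            + ((κ : ℂ) * ((κ : ℂ) - 1)) • (1 : Matrix (Fin N) (Fin N) ℂ)) * Ψ y)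
          - ((y : ℂ) * (1 - (y : ℂ))) • mderiv (mderiv Ψ) y - aκ y • mderiv Ψ y := by
      rw [← key]; abel
    rw [hFκy, hΨFκ, hFdef y hy, haκy]
    simp only [mul_add, add_mul, mul_sub, sub_mul, mul_neg, neg_mul, mul_smul_comm,
      smul_mul_assoc, mul_assoc, hinv', hinv, mul_one, one_mul, smul_smul]
    module
  · intro h P hP y hy
    obtain ⟨h1, h2⟩ := h y hy
    have hdet := (Matrix.isUnit_iff_isUnit_det _).1 (hΨinv y hy)
    have hinv : Ψ y * (Ψ y)⁻¹ = 1 := Matrix.mul_nonsing_inv _ hdet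
    have hinv' : (Ψ y)⁻¹ * Ψ y = 1 := Matrix.nonsing_inv_mul _ hdet
    have hc1 : ∀ A : Matrix (Fin N) (Fin N) ℂ, Ψ y * ((Ψ y)⁻¹ * A) = A := by
      intro A; rw [← mul_assoc, hinv, one_mul]
    rw [Dconj_expand S R Ψ P aκ Fκ hΨsmooth hΨinv hΨode hP hy]
    have hA : aκ y • (1 : Matrix (Fin N) (Fin N) ℂ) + (2:ℂ) • (S + (y:ℂ) • R)
        = (C + (κ : ℂ) • (1 : Matrix (Fin N) (Fin N) ℂ))
            - (y : ℂ) • (U + (2 * (κ : ℂ)) • (1 : Matrix (Fin N) (Fin N) ℂ)) := by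
      rw [h1, add_smul, ha y hy]
      module
    have hG : (((y : ℂ) * (1 - (y : ℂ))) • mderiv (mderiv Ψ) y
          + aκ y • mderiv Ψ y + Ψ y * Fκ y) * (Ψ y)⁻¹
        = -(V + (κ : ℂ) • U
            + ((κ : ℂ) * ((κ : ℂ) - 1)) • (1 : Matrix (Fin N) (Fin N) ℂ)) := by
      rw [h2, hFdef y hy, h1]
      simp only [mul_add, add_mul, mul_sub, sub_mul, mul_neg, neg_mul, mul_smul_comm,
        smul_mul_assoc, mul_assoc, hinv', hinv, hc1, mul_one, one_mul, smul_smul]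
      module
    rw [hA, hG, mul_neg, ← sub_eq_add_neg]
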